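/- arXiv:1810.01053 — 3 statements merged into one kernel-verified Lean document; each statement's English description precedes it below -/
import Mathlib

section
/- Let (s_k)_{k≥0} be a nondecreasing sequence of nonnegative real numbers, let (v_k)_{k≥0} and (α_i)_{i≥1} be sequences of nonnegative real numbers, and assume v₀² ≤ s₀. If for every k ≥ 0 one has v_k² ≤ s_k + Σ_{i=1}^{k} α_i v_i, then for every k ≥ 0, v_k ≤ (1/2)·Σ_{i=1}^{k} α_i + sqrt( ((1/2)·Σ_{i=1}^{k} α_i)² + s_k ). -/
lemma quad_aux (x A S : ℝ) (hx : 0 ≤ x) (hS : 0 ≤ S)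
    (h : x ^ 2 ≤ S + 2 * A * x) : x ≤ A + Real.sqrt (A ^ 2 + S) := by
  have h1 : (x - A) ^ 2 ≤ A ^ 2 + S := by ring_nf; nlinarith
  have h2 : x - A ≤ Real.sqrt (A ^ 2 + S) := by
    calc x - A ≤ |x - A| := le_abs_self _
    _ = Real.sqrt ((x - A) ^ 2) := (Real.sqrt_sq_eq_abs _).symm
    _ ≤ Real.sqrt (A ^ 2 + S) := Real.sqrt_le_sqrt h1
  linarith

theorem stmt1 (s v α : ℕ → ℝ)
    (hs0 : ∀ k, 0 ≤ s k) (hsmono : Monotone s)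
    (hv : ∀ k, 0 ≤ v k) (hα : ∀ i, 0 ≤ α i)
    (h0 : v 0 ^ 2 ≤ s 0)
    (hrec : ∀ k, v k ^ 2 ≤ s k + ∑ i ∈ Finset.Icc 1 k, α i * v i) :
    ∀ k, v k ≤ (1 / 2) * (∑ i ∈ Finset.Icc 1 k, α i) +
      Real.sqrt (((1 / 2) * ∑ i ∈ Finset.Icc 1 k, α i) ^ 2 + s k) := by
  intro k
  obtain ⟨m, hm, hmax⟩ := Finset.exists_max_image (Finset.range (k + 1)) v
    ⟨0, Finset.mem_range.2 (Nat.succ_pos k)⟩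
  have hmk : m ≤ k := Nat.lt_succ_iff.mp (Finset.mem_range.mp hm)
  set A := (1 / 2) * ∑ i ∈ Finset.Icc 1 k, α i with hA
  have hvk : v k ≤ v m := hmax k (Finset.mem_range.2 (Nat.lt_succ_self k))
  have key : v m ^ 2 ≤ s k + 2 * A * v m := by
    have h1 : v m ^ 2 ≤ s m + ∑ i ∈ Finset.Icc 1 m, α i * v i := hrec m
    have h2 : ∑ i ∈ Finset.Icc 1 m, α i * v i ≤ ∑ i ∈ Finset.Icc 1 k, α i * v m := by
      apply Finset.sum_le_sum_of_subset_of_nonneg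
        (Finset.Icc_subset_Icc_right hmk) ?_ |>.trans ?_
      · intro i _ _; exact mul_nonneg (hα i) (hv i)
      · apply Finset.sum_le_sum
        intro i hi
        have hik : i ≤ k := (Finset.mem_Icc.mp hi).2
        exact mul_le_mul_of_nonneg_left
          (hmax i (Finset.mem_range.2 (Nat.lt_succ_iff.mpr hik))) (hα i)
    have h3 : ∑ i ∈ Finset.Icc 1 k, α i * v m = 2 * A * v m := by
      rw [hA, ← Finset.sum_mul]; ring
    have := hsmono hmk
    linarith [h2.trans_eq h3]
  have := quad_aux (v m) A (s k) (hv m) (hs0 k) key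
  linarith
end

section
/- Let L, β₀, ϑ, ε > 0 and z ∈ ℝ^{m×n}. Suppose ẑ ∈ ℝ^{m×n} satisfies ‖ẑ − (1/m)11ᵀz‖²_F ≤ 2ϑε/β₀, and set x⁺ = (Lϑ·z + β₀·ẑ)/(Lϑ + β₀). Then (L/2)‖x⁺ − z‖²_F + (β₀/(2ϑ))‖Πx⁺‖²_F ≤ min_{x ∈ ℝ^{m×n}} [ (L/2)‖x − z‖²_F + (β₀/(2ϑ))‖Πx‖²_F ] + ε. -/
open scoped RealInnerProductSpace

/-- The column-average operator `x ↦ (1/m)·1 1ᵀ x` on `ℝ^{m×n}`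
(viewed as a Euclidean space with the Frobenius inner product). -/
noncomputable def colAvg (m n : ℕ) (x : EuclideanSpace ℝ (Fin m × Fin n)) :
    EuclideanSpace ℝ (Fin m × Fin n) :=
  WithLp.toLp 2 (fun p : Fin m × Fin n => (m : ℝ)⁻¹ * ∑ k : Fin m, x (k, p.2))

/-- The operator `Π = I − (1/m)·1 1ᵀ` acting on `ℝ^{m×n}`. -/
noncomputable def cProj (m n : ℕ) (x : EuclideanSpace ℝ (Fin m × Fin n)) :
    EuclideanSpace ℝ (Fin m × Fin n) :=
  x - colAvg m n x


lemma colAvg_add (m n : ℕ) (x y : EuclideanSpace ℝ (Fin m × Fin n)) :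
    colAvg m n (x + y) = colAvg m n x + colAvg m n y := by
  ext p
  simp [colAvg, Finset.sum_add_distrib, mul_add]

lemma colAvg_smul (m n : ℕ) (c : ℝ) (x : EuclideanSpace ℝ (Fin m × Fin n)) :
    colAvg m n (c • x) = c • colAvg m n x := by
  ext p
  simp [colAvg, Finset.mul_sum]
  exact Finset.sum_congr rfl fun k _ => by ring

lemma colAvg_colAvg (m n : ℕ) (hm : 0 < m) (x : EuclideanSpace ℝ (Fin m × Fin n)) :
    colAvg m n (colAvg m n x) = colAvg m n x := by
  ext p
  have hm' : (m : ℝ) ≠ 0 := by positivity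
  simp [colAvg, Finset.sum_const]
  field_simp
  simp

lemma inner_colAvg_symm (m n : ℕ) (x y : EuclideanSpace ℝ (Fin m × Fin n)) :
    ⟪colAvg m n x, y⟫ = ⟪x, colAvg m n y⟫ := by
  simp only [PiLp.inner_apply, RCLike.inner_apply, conj_trivial]
  rw [Fintype.sum_prod_type, Fintype.sum_prod_type]
  rw [Finset.sum_comm, Finset.sum_comm (γ := Fin m)]
  refine Finset.sum_congr rfl fun j _ => ?_
  simp only [colAvg, PiLp.toLp_apply, ← Finset.mul_sum, ← Finset.sum_mul]
  ring

lemma colAvg_sub (m n : ℕ) (x y : EuclideanSpace ℝ (Fin m × Fin n)) :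
    colAvg m n (x - y) = colAvg m n x - colAvg m n y := by
  ext p
  simp [colAvg, Finset.sum_sub_distrib, mul_sub]

lemma cProj_sub (m n : ℕ) (x y : EuclideanSpace ℝ (Fin m × Fin n)) :
    cProj m n (x - y) = cProj m n x - cProj m n y := by
  simp only [cProj, colAvg_sub]; abel

lemma cProj_add (m n : ℕ) (x y : EuclideanSpace ℝ (Fin m × Fin n)) :
    cProj m n (x + y) = cProj m n x + cProj m n y := by
  simp only [cProj, colAvg_add]; abel

lemma cProj_smul (m n : ℕ) (c : ℝ) (x : EuclideanSpace ℝ (Fin m × Fin n)) :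
    cProj m n (c • x) = c • cProj m n x := by
  simp only [cProj, colAvg_smul, smul_sub]

lemma cProj_colAvg (m n : ℕ) (hm : 0 < m) (x : EuclideanSpace ℝ (Fin m × Fin n)) :
    cProj m n (colAvg m n x) = 0 := by
  simp [cProj, colAvg_colAvg m n hm]

lemma inner_cProj_symm (m n : ℕ) (x y : EuclideanSpace ℝ (Fin m × Fin n)) :
    ⟪cProj m n x, y⟫ = ⟪x, cProj m n y⟫ := by
  simp only [cProj, inner_sub_left, inner_sub_right, inner_colAvg_symm]

lemma inner_cProj_cProj (m n : ℕ) (hm : 0 < m) (x y : EuclideanSpace ℝ (Fin m × Fin n)) :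
    ⟪cProj m n x, cProj m n y⟫ = ⟪cProj m n x, y⟫ := by
  have h : ⟪cProj m n x, colAvg m n y⟫ = (0 : ℝ) := by
    rw [inner_cProj_symm, cProj_colAvg m n hm, inner_zero_right]
  have h2 : ⟪cProj m n x, cProj m n y⟫
      = ⟪cProj m n x, y⟫ - ⟪cProj m n x, colAvg m n y⟫ := inner_sub_right _ _ _
  rw [h2, h, sub_zero]

lemma norm_cProj_sq_le (m n : ℕ) (hm : 0 < m) (x : EuclideanSpace ℝ (Fin m × Fin n)) :
    ‖cProj m n x‖ ^ 2 ≤ ‖x‖ ^ 2 := by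
  have hx : x = cProj m n x + colAvg m n x := by rw [cProj]; abel
  have h0 : ⟪cProj m n x, colAvg m n x⟫ = (0 : ℝ) := by
    rw [inner_cProj_symm, cProj_colAvg m n hm, inner_zero_right]
  have h1 := norm_add_sq_real (cProj m n x) (colAvg m n x)
  rw [← hx] at h1
  nlinarith [sq_nonneg ‖colAvg m n x‖]

lemma norm_cProj_le (m n : ℕ) (hm : 0 < m) (x : EuclideanSpace ℝ (Fin m × Fin n)) :
    ‖cProj m n x‖ ≤ ‖x‖ := by
  nlinarith [norm_cProj_sq_le m n hm x, norm_nonneg (cProj m n x), norm_nonneg x]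

theorem stmt3 (m n : ℕ) (hm : 0 < m) (L β₀ ϑ ε : ℝ)
    (hL : 0 < L) (hβ₀ : 0 < β₀) (hϑ : 0 < ϑ) (hε : 0 < ε)
    (z zhat xplus : EuclideanSpace ℝ (Fin m × Fin n))
    (hzhat : ‖zhat - colAvg m n z‖ ^ 2 ≤ 2 * ϑ * ε / β₀)
    (hxp : xplus = (L * ϑ + β₀)⁻¹ • ((L * ϑ) • z + β₀ • zhat)) :
    ∀ x : EuclideanSpace ℝ (Fin m × Fin n),
      (L / 2) * ‖xplus - z‖ ^ 2 + (β₀ / (2 * ϑ)) * ‖cProj m n xplus‖ ^ 2 ≤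
        (L / 2) * ‖x - z‖ ^ 2 + (β₀ / (2 * ϑ)) * ‖cProj m n x‖ ^ 2 + ε := by
  intro x
  have hs : 0 < L * ϑ + β₀ := by positivity
  set s : ℝ := L * ϑ + β₀ with hsdef
  set c : ℝ := β₀ / s with hcdef
  set b : ℝ := β₀ / (2 * ϑ) with hbdef
  have hc : 0 < c := by positivity
  have hb : 0 < b := by positivity
  set w : EuclideanSpace ℝ (Fin m × Fin n) := zhat - colAvg m n z with hwdef
  set d : EuclideanSpace ℝ (Fin m × Fin n) := x - xplus with hddef
  -- xplus as a convex combination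
  have hx1 : xplus = c • zhat + (1 - c) • z := by
    rw [hxp, smul_add, smul_smul, smul_smul]
    have e1 : s⁻¹ * (L * ϑ) = 1 - c := by
      rw [hcdef]; field_simp; rw [hsdef]; ring
    have e2 : s⁻¹ * β₀ = c := by rw [hcdef]; ring
    rw [e1, e2, add_comm]
  have hv1 : xplus - z = c • (zhat - z) := by rw [hx1]; module
  have hw2 : cProj m n zhat = cProj m n w := by
    rw [hwdef, cProj_sub, cProj_colAvg m n hm, sub_zero]
  have hv2 : cProj m n xplus = (1 - c) • cProj m n z + c • cProj m n w := by
    rw [hx1, cProj_add, cProj_smul, cProj_smul, hw2, add_comm]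
  have hwdec : w = (zhat - z) + cProj m n z := by rw [hwdef, cProj]; module
  -- scalar abbreviations
  set T : ℝ := ‖d‖ with hT
  set U : ℝ := ‖cProj m n d‖ with hU
  set W : ℝ := ‖w‖ with hW
  set p : ℝ := ⟪zhat - z, d⟫ with hp
  set q : ℝ := ⟪cProj m n z, d⟫ with hq
  set r : ℝ := ⟪cProj m n w, d⟫ with hr
  have ip1 : ⟪xplus - z, d⟫ = c * p := by rw [hv1, real_inner_smul_left]
  have ip2 : ⟪cProj m n xplus, d⟫ = (1 - c) * q + c * r := by
    rw [hv2, inner_add_left, real_inner_smul_left, real_inner_smul_left]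
  have ip3 : p + q = ⟪w, d⟫ := by rw [hwdec, inner_add_left]
  have ip4 : ⟪cProj m n w, cProj m n d⟫ = r := inner_cProj_cProj m n hm w d
  -- bounds
  have bb1 : -(W * T) ≤ p + q := by
    rw [ip3]
    exact (abs_le.mp (abs_real_inner_le_norm w d)).1
  have bb2 : -(W * U) ≤ r := by
    have h1 := (abs_le.mp (abs_real_inner_le_norm (cProj m n w) (cProj m n d))).1
    rw [ip4] at h1
    have h2 : ‖cProj m n w‖ * U ≤ W * U :=
      mul_le_mul_of_nonneg_right (norm_cProj_le m n hm w) (norm_nonneg _)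
    linarith
  -- expansions
  have hxz : x - z = (xplus - z) + d := by rw [hddef]; abel
  have E1 : ‖x - z‖ ^ 2 = ‖xplus - z‖ ^ 2 + 2 * ⟪xplus - z, d⟫ + T ^ 2 := by
    rw [hxz]; exact norm_add_sq_real _ _
  have hxd : x = xplus + d := by rw [hddef]; abel
  have E2 : ‖cProj m n x‖ ^ 2 = ‖cProj m n xplus‖ ^ 2 + 2 * ⟪cProj m n xplus, d⟫ + U ^ 2 := by
    rw [hxd, cProj_add, norm_add_sq_real, inner_cProj_cProj m n hm]
  clear_value T U W p q r s c b w d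
  -- key scalar inequalities
  have hcL : (0:ℝ) ≤ c * L := by positivity
  have k1 : 0 ≤ (L/2) * T^2 + c * (L * (p + q)) + (L/2) * (c*W)^2 := by
    have h1 := mul_le_mul_of_nonneg_left bb1 hcL
    have h2 : (0:ℝ) ≤ L * (T - c*W)^2 := mul_nonneg hL.le (sq_nonneg _)
    nlinarith only [h1, h2]
  have hcb : (0:ℝ) ≤ c * (2*b) := by positivity
  have k2 : 0 ≤ b * U^2 + c * ((2*b) * r) + b * (c*W)^2 := by
    have h1 := mul_le_mul_of_nonneg_left bb2 hcb
    have h2 : (0:ℝ) ≤ b * (U - c*W)^2 := mul_nonneg hb.le (sq_nonneg _)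
    nlinarith only [h1, h2]
  have hW2 : W^2 ≤ 2 * ϑ * ε / β₀ := hzhat
  have hcε : (L/2 + b) * (c*W)^2 ≤ ε := by
    have h1 : (L/2 + b) * c^2 * (2*ϑ*ε/β₀) = c * ε := by
      rw [hbdef, hcdef, hsdef]; field_simp
    have h2 : (L/2 + b) * (c*W)^2 = (L/2 + b) * c^2 * W^2 := by ring
    have h3 : (L/2 + b) * c^2 * W^2 ≤ (L/2 + b) * c^2 * (2*ϑ*ε/β₀) := by
      apply mul_le_mul_of_nonneg_left hW2 (by positivity)
    have h4 : c ≤ 1 := by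
      rw [hcdef, div_le_one hs, hsdef]
      nlinarith only [mul_pos hL hϑ]
    have h5 : c * ε ≤ ε := by nlinarith only [h4, hε, hc]
    linarith only [h1, h2, h3, h5]
  have hid : 2 * b * (1 - c) * q = c * L * q := by
    have : 2 * b * (1 - c) = c * L := by
      rw [hbdef, hcdef, hsdef]; field_simp; ring
    rw [this]
  rw [E1, E2, ip1, ip2]
  linarith only [k1, k2, hcε, hid]
end

section
/- Let f : ℝ^{m×n} → ℝ be convex and differentiable with gradient ∇f and L-smooth. Let x, x* ∈ ℝ^{m×n} with Πx* = 0, and let x̄ = (1/m)11ᵀx. Then f(x̄) − f(x*) ≤ (‖∇f(x*)‖_F + L‖x − x*‖_F)·‖Πx‖_F + (L/2)‖Πx‖²_F + f(x) − f(x*). -/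
open scoped RealInnerProductSpace

lemma aux_cocoercive {E : Type*} [NormedAddCommGroup E] [InnerProductSpace ℝ E]
    (L : ℝ) (hL : 0 < L) (f : E → ℝ) (gf : E → E)
    (hconv : ∀ a b, f a + ⟪gf a, b - a⟫ ≤ f b)
    (hsmooth : ∀ a b, f b ≤ f a + ⟪gf a, b - a⟫ + (L / 2) * ‖b - a‖ ^ 2)
    (a b : E) :
    f a + ⟪gf a, b - a⟫ + (1 / (2 * L)) * ‖gf b - gf a‖ ^ 2 ≤ f b := by
  set g := gf b - gf a with hg
  set y := b - L⁻¹ • g with hy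
  have h1 := hconv a y
  have h2 := hsmooth b y
  have hyb : y - b = -(L⁻¹ • g) := by rw [hy]; abel
  have hya : y - a = (b - a) - L⁻¹ • g := by rw [hy]; abel
  have e1 : ⟪gf a, y - a⟫ = ⟪gf a, b - a⟫ - L⁻¹ * ⟪gf a, g⟫ := by
    rw [hya, inner_sub_right, real_inner_smul_right]
  have e2 : ⟪gf b, y - b⟫ = -(L⁻¹ * ⟪gf b, g⟫) := by
    rw [hyb, inner_neg_right, real_inner_smul_right]
  have e3 : ‖y - b‖ ^ 2 = L⁻¹ ^ 2 * ‖g‖ ^ 2 := by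
    rw [hyb, norm_neg, norm_smul, mul_pow]
    simp [abs_of_pos (inv_pos.mpr hL)]
  have e4 : ⟪gf b, g⟫ - ⟪gf a, g⟫ = ‖g‖ ^ 2 := by
    rw [← inner_sub_left, ← hg, real_inner_self_eq_norm_sq]
  have hL' : L ≠ 0 := ne_of_gt hL
  have := h1.trans h2
  rw [e1, e2, e3] at this
  have hexp : L⁻¹ * ⟪gf b, g⟫ - L⁻¹ * ⟪gf a, g⟫ = L⁻¹ * ‖g‖ ^ 2 := by
    rw [← mul_sub, e4]
  have hc : L / 2 * (L⁻¹ ^ 2 * ‖g‖ ^ 2) = 1 / (2 * L) * ‖g‖ ^ 2 := by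
    field_simp
  have hc2 : L⁻¹ * ‖g‖ ^ 2 = 1 / (2 * L) * ‖g‖ ^ 2 + 1 / (2 * L) * ‖g‖ ^ 2 := by
    field_simp; ring
  linarith [this, hexp, hc, hc2]

lemma aux_grad_lip {E : Type*} [NormedAddCommGroup E] [InnerProductSpace ℝ E]
    (L : ℝ) (hL : 0 < L) (f : E → ℝ) (gf : E → E)
    (hconv : ∀ a b, f a + ⟪gf a, b - a⟫ ≤ f b)
    (hsmooth : ∀ a b, f b ≤ f a + ⟪gf a, b - a⟫ + (L / 2) * ‖b - a‖ ^ 2)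
    (a b : E) : ‖gf a - gf b‖ ≤ L * ‖a - b‖ := by
  have h1 := aux_cocoercive L hL f gf hconv hsmooth a b
  have h2 := aux_cocoercive L hL f gf hconv hsmooth b a
  have hnn : ‖gf a - gf b‖ = ‖gf b - gf a‖ := norm_sub_rev _ _
  have key : (1 / L) * ‖gf b - gf a‖ ^ 2 ≤ ⟪gf b - gf a, b - a⟫ := by
    have e : ⟪gf a, b - a⟫ + ⟪gf b, a - b⟫ = -⟪gf b - gf a, b - a⟫ := by
      have : a - b = -(b - a) := by abel
      rw [this, inner_neg_right, inner_sub_left]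
      ring
    have e2 : ‖gf a - gf b‖ = ‖gf b - gf a‖ := hnn
    have hc : 1 / (2 * L) * ‖gf b - gf a‖ ^ 2 + 1 / (2 * L) * ‖gf b - gf a‖ ^ 2
        = 1 / L * ‖gf b - gf a‖ ^ 2 := by field_simp; ring
    rw [e2] at h2
    linarith [h1, h2, e, hc]
  have hcs : ⟪gf b - gf a, b - a⟫ ≤ ‖gf b - gf a‖ * ‖b - a‖ := real_inner_le_norm _ _
  rw [hnn]
  rcases eq_or_lt_of_le (norm_nonneg (gf b - gf a)) with h | h
  · rw [← h]; positivity
  · have hba : ‖b - a‖ = ‖a - b‖ := norm_sub_rev _ _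
    have := key.trans hcs
    rw [hba] at this
    have this2 := mul_le_mul_of_nonneg_left this (le_of_lt hL)
    have hq : L * (1 / L * ‖gf b - gf a‖ ^ 2) = ‖gf b - gf a‖ ^ 2 := by field_simp
    rw [hq] at this2
    nlinarith [this2, h]
  
theorem stmt14 (m n : ℕ) (hm : 0 < m) (L : ℝ) (hL : 0 < L)
    (f : EuclideanSpace ℝ (Fin m × Fin n) → ℝ)
    (gf : EuclideanSpace ℝ (Fin m × Fin n) → EuclideanSpace ℝ (Fin m × Fin n))
    -- `f` is convex with gradient `gf`
    (hconv : ∀ a b, f a + ⟪gf a, b - a⟫ ≤ f b)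
    -- `f` is `L`-smooth with gradient `gf`
    (hsmooth : ∀ a b, f b ≤ f a + ⟪gf a, b - a⟫ + (L / 2) * ‖b - a‖ ^ 2)
    (x xs : EuclideanSpace ℝ (Fin m × Fin n))
    (hxs : cProj m n xs = 0) :
    f (colAvg m n x) - f xs ≤
      (‖gf xs‖ + L * ‖x - xs‖) * ‖cProj m n x‖ + (L / 2) * ‖cProj m n x‖ ^ 2
        + f x - f xs := by
  have hdiff : colAvg m n x - x = -(cProj m n x) := by
    rw [cProj]; abel
  have h1 := hsmooth x (colAvg m n x)
  rw [hdiff] at h1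
  have h2 : ⟪gf x, -(cProj m n x)⟫ ≤ ‖gf x‖ * ‖cProj m n x‖ := by
    calc ⟪gf x, -(cProj m n x)⟫ ≤ ‖gf x‖ * ‖-(cProj m n x)‖ := real_inner_le_norm _ _
    _ = ‖gf x‖ * ‖cProj m n x‖ := by rw [norm_neg]
  have h3 : ‖gf x‖ ≤ ‖gf xs‖ + L * ‖x - xs‖ := by
    have := aux_grad_lip L hL f gf hconv hsmooth x xs
    have htri : ‖gf x‖ ≤ ‖gf xs‖ + ‖gf x - gf xs‖ := by
      have := norm_add_le (gf xs) (gf x - gf xs)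
      simpa using this
    linarith
  have hnn : (0:ℝ) ≤ ‖cProj m n x‖ := norm_nonneg _
  have : ‖gf x‖ * ‖cProj m n x‖ ≤ (‖gf xs‖ + L * ‖x - xs‖) * ‖cProj m n x‖ :=
    mul_le_mul_of_nonneg_right h3 hnn
  rw [norm_neg] at h1
  linarith
end
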